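/- Let K be a field and let s : ℕ → K with s(0) ≠ 0. Let u : ℕ → K be the sequence of coefficients of the multiplicative inverse of the power series ∑_{i≥0} s(i)·X^i in K[[X]], and let s^L : ℤ → K extend s by s^L(i) = 0 for i < 0. Then for every m ∈ ℕ, the determinant of the (m+1)×(m+1) Toeplitz matrix whose (i,j) entry is s^L(i − j + 1) equals (−1)^{m+1}·s(0)^{m+2}·u(m+1). (Wronski's formula: column 1 of the number wall of a one-sided sequence is, up to explicit geometric factors, the coefficient sequence of the inverse Laurent series.) -/

import Mathlib

open Finset Matrix

/-- Wronski's formula: the determinant of the (m+1)×(m+1)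
Toeplitz matrix of the one-sided sequence s^L at column index 1 equals
(−1)^{m+1} · s(0)^{m+2} · u(m+1), where u is the coefficient sequence of the
inverse power series. -/
theorem wronski_formula {K : Type*} [Field K]
    (s : ℕ → K) (hs0 : s 0 ≠ 0)
    (u : ℕ → K) (hu : PowerSeries.mk s * PowerSeries.mk u = 1)
    (sL : ℤ → K) (hsL : ∀ i : ℤ, sL i = if 0 ≤ i then s i.toNat else 0) :
    ∀ m : ℕ,
      Matrix.det (Matrix.of fun i j : Fin (m + 1) =>
          sL (((i : ℕ) : ℤ) - ((j : ℕ) : ℤ) + 1))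
        = (-1) ^ (m + 1) * (s 0) ^ (m + 2) * u (m + 1) := by
  -- the convolution identity
  have hconv : ∀ n : ℕ, (∑ k ∈ range (n + 1), s k * u (n - k)) =
      if n = 0 then 1 else 0 := by
    intro n
    have := congrArg (PowerSeries.coeff (R := K) n) hu
    rw [PowerSeries.coeff_mul, PowerSeries.coeff_one] at this
    rw [← this, Finset.Nat.sum_antidiagonal_eq_sum_range_succ_mk]
    simp
  intro m
  -- the big lower-triangular Toeplitz matrix
  set S : Matrix (Fin (m + 2)) (Fin (m + 2)) K :=
    Matrix.of (fun i j : Fin (m + 2) => sL (((i : ℕ) : ℤ) - ((j : ℕ) : ℤ))) with hS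
  have hSlow : ∀ i j : Fin (m + 2), (i : ℕ) < (j : ℕ) → S i j = 0 := by
    intro i j hij
    simp only [hS, Matrix.of_apply, hsL]
    rw [if_neg]
    omega
  have hdetS : S.det = s 0 ^ (m + 2) := by
    rw [Matrix.det_of_lowerTriangular S (fun i j h => hSlow i j h)]
    have : ∀ i : Fin (m + 2), S i i = s 0 := by
      intro i
      simp [hS, hsL]
    rw [Finset.prod_congr rfl (fun i _ => this i)]
    simp
  -- the solution vector
  set v : Fin (m + 2) → K := fun j => u (j : ℕ) with hv
  have hSv : S *ᵥ v = Pi.single 0 1 := by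
    funext i
    rw [Matrix.mulVec, dotProduct]
    have key : ∑ j : Fin (m + 2), S i j * v j
        = ∑ j ∈ range ((i : ℕ) + 1), s ((i : ℕ) - j) * u j := by
      simp only [hS, hv, Matrix.of_apply]
      rw [Fin.sum_univ_eq_sum_range
        (fun j : ℕ => sL (((i : ℕ) : ℤ) - (j : ℤ)) * u j) (m + 2)]
      rw [← Finset.sum_subset (Finset.range_subset_range.2 (by omega : (i:ℕ)+1 ≤ m+2))]
      · apply Finset.sum_congr rfl
        intro j hj
        rw [Finset.mem_range] at hj
        rw [hsL, if_pos (by omega)]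
        congr 2
        omega
      · intro j hj hj2
        rw [Finset.mem_range] at hj
        rw [Finset.mem_range, not_lt] at hj2
        rw [hsL, if_neg (by omega)]
        ring
    rw [key]
    have hrefl : ∑ j ∈ range ((i : ℕ) + 1), s ((i : ℕ) - j) * u j
        = ∑ k ∈ range ((i : ℕ) + 1), s k * u ((i : ℕ) - k) := by
      rw [← Finset.sum_range_reflect (fun k => s k * u ((i : ℕ) - k)) ((i : ℕ) + 1)]
      apply Finset.sum_congr rfl
      intro j hj
      rw [Finset.mem_range] at hj
      congr 2 <;> omega
    rw [hrefl, hconv]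
    rw [Pi.single_apply]
    by_cases h : i = 0
    · simp [h]
    · rw [if_neg (fun h' => h (Fin.ext (by rw [h']; rfl))), if_neg h]
  -- adjugate relation
  have hadj : adjugate S *ᵥ Pi.single 0 1 = S.det • v := by
    rw [← hSv, Matrix.mulVec_mulVec, Matrix.adjugate_mul, Matrix.smul_mulVec,
      Matrix.one_mulVec]
  have hadj' : adjugate S (Fin.last (m + 1)) 0 = S.det * u (m + 1) := by
    have := congrFun hadj (Fin.last (m + 1))
    rw [Matrix.mulVec_single] at this
    simpa [hv, Fin.last] using this
  -- the adjugate entry is the signed minor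
  have hcof : adjugate S (Fin.last (m + 1)) 0
      = (-1) ^ (m + 1) * Matrix.det (Matrix.of fun i j : Fin (m + 1) =>
          sL (((i : ℕ) : ℤ) - ((j : ℕ) : ℤ) + 1)) := by
    rw [Matrix.adjugate_apply, Matrix.det_succ_row_zero]
    rw [Finset.sum_eq_single (Fin.last (m + 1))]
    · rw [Matrix.updateRow_self]
      rw [Pi.single_eq_same]
      have hsub : (S.updateRow 0 (Pi.single (Fin.last (m + 1)) 1)).submatrix Fin.succ
          (Fin.last (m + 1)).succAbove
          = Matrix.of fun i j : Fin (m + 1) =>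
            sL (((i : ℕ) : ℤ) - ((j : ℕ) : ℤ) + 1) := by
        ext i j
        rw [Matrix.submatrix_apply, Fin.succAbove_last,
          Matrix.updateRow_ne (Fin.succ_ne_zero i)]
        simp only [hS, Matrix.of_apply]
        congr 1
        simp [Fin.val_succ, Fin.coe_castSucc]
        push_cast
        ring
      rw [hsub]
      simp [Fin.val_last]
    · intro j _ hj
      rw [Matrix.updateRow_self, Pi.single_eq_of_ne hj]
      ring
    · intro h
      exact absurd (Finset.mem_univ _) h
  rw [hadj', hdetS] at hcof
  have h1 : ((-1 : K) ^ (m + 1)) * ((-1 : K) ^ (m + 1)) = 1 := by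
    rw [← pow_add, ← two_mul, pow_mul]
    norm_num
  calc Matrix.det (Matrix.of fun i j : Fin (m + 1) =>
          sL (((i : ℕ) : ℤ) - ((j : ℕ) : ℤ) + 1))
      = (-1) ^ (m + 1) * ((-1) ^ (m + 1) * Matrix.det (Matrix.of fun i j : Fin (m + 1) =>
          sL (((i : ℕ) : ℤ) - ((j : ℕ) : ℤ) + 1))) := by
        rw [← mul_assoc, h1, one_mul]
    _ = (-1) ^ (m + 1) * (s 0 ^ (m + 2) * u (m + 1)) := by rw [← hcof]
    _ = (-1) ^ (m + 1) * s 0 ^ (m + 2) * u (m + 1) := by ring
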